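/- Let a₁, a₂ be natural numbers with a₂ > a₁ > 1 and let k_X, l_X, k be positive reals. Define f(x) = k_X − l_X x + k(a₂ − a₁)x^{a₁} and x* = (l_X/(k a₁(a₂ − a₁)))^{1/(a₁ − 1)}. Then: (i) for x > 0, f'(x) = 0 if and only if x = x*; (ii) f(x*) = k_X + l_X(1/a₁ − 1)x*; and (iii) f(x*) < 0 if and only if k < k*, where k* = (1/(a₂ − a₁)) · (l_X/a₁)^{a₁} · ((a₁ − 1)/k_X)^{a₁ − 1}. -/

import Mathlib

set_option maxHeartbeats 1000000 in
/-- Properties of the critical point `x* = (l_X/(k a₁(a₂−a₁)))^{1/(a₁−1)}` of the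
steady-state function `f(x) = k_X − l_X x + k(a₂−a₁)x^{a₁}`: (i) `x*` is the unique
positive critical point of `f`; (ii) `f(x*) = k_X + l_X(1/a₁ − 1)x*`; and
(iii) `f(x*) < 0 ↔ k < k*`. -/
theorem critical_point_properties (a₁ a₂ : ℕ) (h1 : 1 < a₁) (h2 : a₁ < a₂)
    (kX lX k : ℝ) (hkX : 0 < kX) (hlX : 0 < lX) (hk : 0 < k) :
    (∀ x : ℝ, 0 < x →
      (deriv (fun x : ℝ => kX - lX * x + k * ((a₂ : ℝ) - (a₁ : ℝ)) * x ^ a₁) x = 0 ↔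
        x = (lX / (k * (a₁ : ℝ) * ((a₂ : ℝ) - (a₁ : ℝ)))) ^ ((1 : ℝ) / ((a₁ : ℝ) - 1)))) ∧
    (kX - lX * (lX / (k * (a₁ : ℝ) * ((a₂ : ℝ) - (a₁ : ℝ)))) ^ ((1 : ℝ) / ((a₁ : ℝ) - 1)) +
      k * ((a₂ : ℝ) - (a₁ : ℝ)) *
        ((lX / (k * (a₁ : ℝ) * ((a₂ : ℝ) - (a₁ : ℝ)))) ^ ((1 : ℝ) / ((a₁ : ℝ) - 1))) ^ a₁
      = kX + lX * (1 / (a₁ : ℝ) - 1) *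
          (lX / (k * (a₁ : ℝ) * ((a₂ : ℝ) - (a₁ : ℝ)))) ^ ((1 : ℝ) / ((a₁ : ℝ) - 1))) ∧
    ((kX - lX * (lX / (k * (a₁ : ℝ) * ((a₂ : ℝ) - (a₁ : ℝ)))) ^ ((1 : ℝ) / ((a₁ : ℝ) - 1)) +
      k * ((a₂ : ℝ) - (a₁ : ℝ)) *
        ((lX / (k * (a₁ : ℝ) * ((a₂ : ℝ) - (a₁ : ℝ)))) ^ ((1 : ℝ) / ((a₁ : ℝ) - 1))) ^ a₁
      < 0) ↔
      k < (1 / ((a₂ : ℝ) - (a₁ : ℝ))) * (lX / (a₁ : ℝ)) ^ a₁ *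
        (((a₁ : ℝ) - 1) / kX) ^ (a₁ - 1)) := by
  have ha1 : (1 : ℝ) < (a₁ : ℝ) := by exact_mod_cast h1
  have ha2 : (a₁ : ℝ) < (a₂ : ℝ) := by exact_mod_cast h2
  have hd : (0 : ℝ) < (a₂ : ℝ) - (a₁ : ℝ) := by linarith
  have ha1pos : (0 : ℝ) < (a₁ : ℝ) := by linarith
  set n : ℕ := a₁ - 1 with hn
  have hnne : n ≠ 0 := by omega
  have hna : a₁ = n + 1 := by omega
  have hncast : (n : ℝ) = (a₁ : ℝ) - 1 := by
    have : ((n : ℕ) : ℝ) = ((a₁ : ℕ) : ℝ) - ((1 : ℕ) : ℝ) := by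
      rw [hn, Nat.cast_sub (le_of_lt h1)]
    simpa using this
  set c : ℝ := k * (a₁ : ℝ) * ((a₂ : ℝ) - (a₁ : ℝ)) with hcdef
  have hc : 0 < c := by positivity
  have hlc : 0 < lX / c := by positivity
  set X : ℝ := (lX / c) ^ ((1 : ℝ) / ((a₁ : ℝ) - 1)) with hXdef
  have hX : 0 < X := Real.rpow_pos_of_pos hlc _
  have hXpow : X ^ n = lX / c := by
    rw [hXdef, ← Real.rpow_natCast ((lX / c) ^ ((1 : ℝ) / ((a₁ : ℝ) - 1))) n,
      ← Real.rpow_mul (le_of_lt hlc), hncast, one_div,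
      inv_mul_cancel₀ (by linarith : (a₁ : ℝ) - 1 ≠ 0), Real.rpow_one]
  have hderiv : ∀ x : ℝ,
      deriv (fun x : ℝ => kX - lX * x + k * ((a₂ : ℝ) - (a₁ : ℝ)) * x ^ a₁) x
        = -lX + k * ((a₂ : ℝ) - (a₁ : ℝ)) * ((a₁ : ℝ) * x ^ n) := by
    intro x
    have h := (((hasDerivAt_const x kX).sub ((hasDerivAt_id x).const_mul lX)).add
      ((hasDerivAt_pow a₁ x).const_mul (k * ((a₂ : ℝ) - (a₁ : ℝ)))))
    have := h.deriv
    simp only [id_eq, mul_one] at this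
    refine this.trans ?_; ring
  refine ⟨?_, ?_, ?_⟩
  · intro x hx
    rw [hderiv x]
    constructor
    · intro hx0
      have hxn : c * x ^ n = lX := by rw [hcdef]; nlinarith [hx0]
      have hxn' : x ^ n = X ^ n := by
        rw [hXpow]
        field_simp at hxn ⊢
        linarith
      exact (pow_left_strictMonoOn₀ hnne).injOn (le_of_lt hx) (le_of_lt hX) hxn'
    · intro hxe
      rw [hxe, hXpow]
      field_simp [hcdef]
      ring
  · have hXa : X ^ a₁ = (lX / c) * X := by
      rw [hna, pow_succ, hXpow]
    rw [hXa, hcdef]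
    field_simp
    ring
  · have hXa : X ^ a₁ = (lX / c) * X := by
      rw [hna, pow_succ, hXpow]
    rw [hXa]
    have key : kX - lX * X + k * ((a₂ : ℝ) - (a₁ : ℝ)) * ((lX / c) * X)
        = kX - lX * ((a₁ : ℝ) - 1) / (a₁ : ℝ) * X := by
      rw [hcdef]; field_simp; ring
    rw [key]
    have ha1m1 : (0 : ℝ) < (a₁ : ℝ) - 1 := by linarith
    set B : ℝ := (a₁ : ℝ) * kX / (lX * ((a₁ : ℝ) - 1)) with hB
    have hBpos : 0 < B := div_pos (by positivity) (mul_pos hlX ha1m1)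
    have e : kX - lX * ((a₁ : ℝ) - 1) / (a₁ : ℝ) * X
        = ((a₁ : ℝ) * kX - X * (lX * ((a₁ : ℝ) - 1))) / (a₁ : ℝ) := by
      field_simp
    have step1 : kX - lX * ((a₁ : ℝ) - 1) / (a₁ : ℝ) * X < 0 ↔ B < X := by
      rw [e, hB, div_lt_iff₀ (mul_pos hlX ha1m1), div_lt_iff₀ ha1pos, zero_mul,
        sub_neg]
    have step2 : B < X ↔ B ^ n < lX / c := by
      rw [← hXpow]
      exact (pow_lt_pow_iff_left₀ (le_of_lt hBpos) (le_of_lt hX) hnne).symm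
    have hBn : 0 < ((a₁ : ℝ) * kX / (lX * ((a₁ : ℝ) - 1))) ^ n := by
      have := pow_pos hBpos n
      rwa [hB] at this
    have step3 : B ^ n < lX / c ↔
        k < (1 / ((a₂ : ℝ) - (a₁ : ℝ))) * (lX / (a₁ : ℝ)) ^ a₁ *
          (((a₁ : ℝ) - 1) / kX) ^ (a₁ - 1) := by
      rw [hcdef, hB, lt_div_iff₀ (mul_pos (mul_pos hk ha1pos) hd)]
      have hrhs : (1 / ((a₂ : ℝ) - (a₁ : ℝ))) * (lX / (a₁ : ℝ)) ^ a₁ *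
          (((a₁ : ℝ) - 1) / kX) ^ n
          = lX / ((a₁ : ℝ) * ((a₂ : ℝ) - (a₁ : ℝ)) *
              ((a₁ : ℝ) * kX / (lX * ((a₁ : ℝ) - 1))) ^ n) := by
        have hcastn : ((n : ℝ) + 1) = (a₁ : ℝ) := by rw [hncast]; ring
        have hd' : (0 : ℝ) < (a₂ : ℝ) - ((n : ℝ) + 1) := by rw [hcastn]; exact hd
        rw [hna, pow_succ]
        push_cast
        have h1ne : ((n : ℝ) + 1) ≠ 0 := by positivity
        have hd2 : (a₂ : ℝ) - ((n : ℝ) + 1) ≠ 0 := ne_of_gt hd'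
        have hnsub : (n : ℝ) + 1 - 1 = (n : ℝ) := by ring
        rw [hnsub]
        have hnne' : (n : ℝ) ≠ 0 := by
          rw [hncast]; linarith
        field_simp
        rw [← mul_pow, ← mul_pow]
        rw [show lX / ((n : ℝ) + 1) * ((n : ℝ) / kX) * (((n : ℝ) + 1) * kX / ((n : ℝ) * lX)) = 1 by
          field_simp]
        exact one_pow n
      rw [hrhs]
      rw [lt_div_iff₀ (mul_pos (mul_pos ha1pos hd) hBn)]
      constructor <;> intro h <;> linarith [h]
    rw [step1, step2, step3]
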